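/- For an n×n complex matrix M, the coefficient of λ^{n-p} in the characteristic polynomial det(λI − M†M) equals (−1)^p times the sum over all p×p submatrices of M of the squared absolute values of their determinants. -/

import Mathlib

open Matrix

attribute [local instance] Classical.propDecidable

section Aux
open Finset Equiv Polynomial

variable {p n : ℕ}

/-- Bijection: (strictly monotone, permutation) pairs ↔ injective maps `Fin p → Fin n`. -/
lemma strictMono_perm_comp_bijective :
    Function.Bijective (fun x : {f : Fin p → Fin n // StrictMono f} × Equiv.Perm (Fin p) =>
      (⟨x.1.1 ∘ x.2, x.1.2.injective.comp x.2.injective⟩ :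
        {g : Fin p → Fin n // Function.Injective g})) := by
  constructor
  · rintro ⟨⟨f₁, h₁⟩, τ₁⟩ ⟨⟨f₂, h₂⟩, τ₂⟩ hEq
    have hcomp : f₁ ∘ τ₁ = f₂ ∘ τ₂ := congrArg Subtype.val hEq
    have hrange : Set.range f₁ = Set.range f₂ := by
      have e1 : Set.range (f₁ ∘ τ₁) = Set.range f₁ := τ₁.surjective.range_comp f₁
      have e2 : Set.range (f₂ ∘ τ₂) = Set.range f₂ := τ₂.surjective.range_comp f₂
      rw [← e1, ← e2, hcomp]
    have hf : f₁ = f₂ := by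
      have himg : Finset.univ.image f₁ = Finset.univ.image f₂ := by
        ext x; simp only [Finset.mem_image, Finset.mem_univ, true_and]
        constructor <;> intro ⟨i, hi⟩
        · have : x ∈ Set.range f₂ := hrange ▸ ⟨i, hi⟩; exact this
        · have : x ∈ Set.range f₁ := hrange.symm ▸ ⟨i, hi⟩; exact this
      have hc : (Finset.univ.image f₁).card = p := by
        rw [Finset.card_image_of_injective _ h₁.injective, Finset.card_univ, Fintype.card_fin]
      have u1 := Finset.orderEmbOfFin_unique hc (fun x => Finset.mem_image_of_mem f₁ (Finset.mem_univ x)) h₁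
      have u2 := Finset.orderEmbOfFin_unique hc
        (fun x => himg ▸ Finset.mem_image_of_mem f₂ (Finset.mem_univ x)) h₂
      funext i; rw [show f₁ i = _ from congrFun u1 i, ← congrFun u2 i]
    subst hf
    have hτ : τ₁ = τ₂ := by
      ext i
      exact congrArg _ (h₁.injective (congrFun hcomp i))
    simp [hτ]
  · rintro ⟨g, hg⟩
    set s : Finset (Fin n) := Finset.univ.image g with hs
    have hc : s.card = p := by
      rw [hs, Finset.card_image_of_injective _ hg, Finset.card_univ, Fintype.card_fin]
    have hrange : Set.range g = ↑s := by
      ext x; simp [hs]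
    refine ⟨⟨⟨s.orderEmbOfFin hc, (s.orderEmbOfFin hc).strictMono⟩,
      (Equiv.ofInjective g hg).trans ((Equiv.setCongr hrange).trans (s.orderIsoOfFin hc).symm.toEquiv)⟩, ?_⟩
    have key : ∀ y : {x // x ∈ s}, (s.orderEmbOfFin hc) ((s.orderIsoOfFin hc).symm y) = y := by
      intro y
      rw [← Finset.coe_orderIsoOfFin_apply]
      simp
    refine Subtype.ext (funext fun i => ?_)
    exact key ⟨g i, by simp [hs]⟩

local notation "ε " σ:arg => ((Equiv.Perm.sign σ : ℤ) : ℂ)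

theorem cauchyBinet (A : Matrix (Fin p) (Fin n) ℂ) (B : Matrix (Fin n) (Fin p) ℂ) :
    det (A * B) = ∑ f : {f : Fin p → Fin n // StrictMono f},
      det (A.submatrix id f.1) * det (B.submatrix f.1 id) := by
  calc det (A * B)
      = ∑ g : Fin p → Fin n, ∑ σ : Perm (Fin p), ε σ * ∏ i, A (σ i) (g i) * B (g i) i := by
        simp only [det_apply', Matrix.mul_apply, Finset.prod_univ_sum, Finset.mul_sum,
          Fintype.piFinset_univ]
        rw [Finset.sum_comm]
    _ = ∑ g : Fin p → Fin n, (∏ i, B (g i) i) * det (A.submatrix id g) := by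
        refine Finset.sum_congr rfl fun g _ => ?_
        rw [det_apply', Finset.mul_sum]
        refine Finset.sum_congr rfl fun σ _ => ?_
        simp only [submatrix_apply, id_eq]
        rw [Finset.prod_mul_distrib]
        ring
    _ = ∑ g ∈ Finset.univ.filter (fun g : Fin p → Fin n => Function.Injective g),
          (∏ i, B (g i) i) * det (A.submatrix id g) := by
        refine (Finset.sum_subset (Finset.filter_subset _ _) fun g _ hg => ?_).symm
        have hni : ¬ Function.Injective g := by simpa using hg
        obtain ⟨i, j, hgij, hij⟩ : ∃ i j, g i = g j ∧ i ≠ j := by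
          rw [Function.Injective] at hni; push_neg at hni
          obtain ⟨i, j, h1, h2⟩ := hni; exact ⟨i, j, h1, h2⟩
        rw [det_zero_of_column_eq hij (fun k => by simp [submatrix_apply, hgij]), mul_zero]
    _ = ∑ g : {g : Fin p → Fin n // Function.Injective g},
          (∏ i, B (g.1 i) i) * det (A.submatrix id g.1) := by
        exact Finset.sum_subtype _ (by simp) _
    _ = ∑ x : {f : Fin p → Fin n // StrictMono f} × Perm (Fin p),
          (∏ i, B (x.1.1 (x.2 i)) i) * det (A.submatrix id (x.1.1 ∘ x.2)) :=
        (Fintype.sum_bijective _ strictMono_perm_comp_bijective _ _ fun x => rfl).symm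
    _ = ∑ f : {f : Fin p → Fin n // StrictMono f}, ∑ τ : Perm (Fin p),
          (∏ i, B (f.1 (τ i)) i) * (ε τ * det (A.submatrix id f.1)) := by
        rw [Fintype.sum_prod_type]
        refine Finset.sum_congr rfl fun f _ => Finset.sum_congr rfl fun τ _ => ?_
        congr 1
        have h1 : A.submatrix id (f.1 ∘ τ) = (A.submatrix id f.1).submatrix id τ := by
          simp [submatrix_submatrix]
        rw [h1, det_permute' τ]
    _ = ∑ f : {f : Fin p → Fin n // StrictMono f},
          det (A.submatrix id f.1) * det (B.submatrix f.1 id) := by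
        refine Finset.sum_congr rfl fun f _ => ?_
        rw [det_apply' (B.submatrix f.1 id), Finset.mul_sum]
        refine Finset.sum_congr rfl fun τ _ => ?_
        simp only [submatrix_apply, id_eq]
        ring


lemma strictMono_eq_of_image_eq {f g : Fin p → Fin n} (hf : StrictMono f) (hg : StrictMono g)
    (h : Finset.univ.image f = Finset.univ.image g) : f = g := by
  have hc : (Finset.univ.image f).card = p := by
    rw [Finset.card_image_of_injective _ hf.injective, card_univ, Fintype.card_fin]
  have u1 := Finset.orderEmbOfFin_unique hc
    (fun x => Finset.mem_image_of_mem f (mem_univ x)) hf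
  have u2 := Finset.orderEmbOfFin_unique hc
    (fun x => h ▸ Finset.mem_image_of_mem g (mem_univ x)) hg
  funext i; rw [show f i = _ from congrFun u1 i, ← congrFun u2 i]

lemma det_of_identity_rows {N : Matrix (Fin n) (Fin n) ℂ[X]} (s : Finset (Fin n))
    (h : ∀ i ∈ s, ∀ j, N i j = if i = j then 1 else 0) :
    N.det = (N.submatrix (fun i : {x : Fin n // x ∉ s} => i.1)
      (fun i : {x : Fin n // x ∉ s} => i.1)).det := by
  rw [← det_submatrix_equiv_self (Equiv.sumCompl (fun x : Fin n => x ∈ s)) N]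
  have hb : N.submatrix (Equiv.sumCompl (fun x : Fin n => x ∈ s))
      (Equiv.sumCompl (fun x : Fin n => x ∈ s)) = fromBlocks 1 0
      (N.submatrix (fun i : {x // x ∉ s} => i.1) (fun i : {x // x ∈ s} => i.1))
      (N.submatrix (fun i : {x // x ∉ s} => i.1) (fun i : {x // x ∉ s} => i.1)) := by
    ext i j
    cases i with
    | inl i =>
      cases j with
      | inl j =>
        simp only [submatrix_apply, Equiv.sumCompl_apply_inl, fromBlocks_apply₁₁,
          h i.1 i.2, one_apply, Subtype.ext_iff]
      | inr j =>
        have hne : i.1 ≠ j.1 := fun hh => j.2 (hh ▸ i.2)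
        simp [submatrix_apply, Equiv.sumCompl_apply_inl, Equiv.sumCompl_apply_inr,
          fromBlocks_apply₁₂, h i.1 i.2, hne]
    | inr i => cases j <;> simp [Equiv.sumCompl_apply_inl, Equiv.sumCompl_apply_inr]
  rw [hb, det_fromBlocks_zero₁₂, det_one, one_mul]

lemma charpoly_coeff_minors (hpn : p ≤ n) (A : Matrix (Fin n) (Fin n) ℂ) :
    A.charpoly.coeff (n - p) =
      (-1) ^ p * ∑ r : {f : Fin p → Fin n // StrictMono f}, (A.submatrix r.1 r.1).det := by
  classical
  set f := (detRowAlternating : (Fin n → ℂ[X]) [⋀^Fin n]→ₗ[ℂ[X]] ℂ[X]).toMultilinearMap with hf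
  set e : Fin n → Fin n → ℂ[X] := fun i => (1 : Matrix (Fin n) (Fin n) ℂ[X]) i with he
  set w : Fin n → Fin n → ℂ[X] := fun i => (A.map C) i with hw
  set d : Finset (Fin n) → ℂ := fun s =>
    (A.submatrix (fun i : {x : Fin n // x ∉ s} => i.1) (fun i : {x : Fin n // x ∉ s} => i.1)).det
    with hd
  have hchar : charmatrix A = (fun i => (X : ℂ[X]) • e i) + fun i => -(w i) := by
    funext i j
    by_cases hij : i = j <;>
      simp [charmatrix_apply, he, hw, one_apply, hij, Matrix.map_apply, sub_eq_add_neg]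
  have expand : A.charpoly = ∑ s : Finset (Fin n),
      (X : ℂ[X]) ^ s.card * ((-1) ^ (n - s.card) * C (d s)) := by
    rw [charpoly]
    have h0 : (charmatrix A).det = f (charmatrix A) := rfl
    rw [h0, hchar, f.map_add_univ]
    refine Finset.sum_congr rfl fun s _ => ?_
    have h1 : s.piecewise (fun i => (X : ℂ[X]) • e i) (fun i => -(w i))
        = s.piecewise (fun i => (X : ℂ[X]) • (s.piecewise e (fun i => -(w i))) i)
            (s.piecewise e (fun i => -(w i))) := by
      funext i
      by_cases hi : i ∈ s <;>
        simp [Finset.piecewise_eq_of_mem _ _ _, Finset.piecewise_eq_of_notMem _ _ _, hi]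
    have h2 : s.piecewise e (fun i => -(w i))
        = sᶜ.piecewise (fun i => (-1 : ℂ[X]) • (s.piecewise e w) i) (s.piecewise e w) := by
      funext i
      by_cases hi : i ∈ s <;>
        simp [Finset.piecewise_eq_of_mem _ _ _, Finset.piecewise_eq_of_notMem _ _ _, hi,
          Finset.mem_compl]
    have h3 : f (s.piecewise e w) = C (d s) := by
      have hdet : f (s.piecewise e w) = Matrix.det (Matrix.of fun i j => s.piecewise e w i j) :=
        rfl
      rw [hdet, det_of_identity_rows s (fun i hi j => by
        simp [Finset.piecewise_eq_of_mem _ _ _ hi, he, one_apply])]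
      have hsub : ((Matrix.of fun i j => s.piecewise e w i j).submatrix
            (fun i : {x : Fin n // x ∉ s} => i.1) (fun i : {x : Fin n // x ∉ s} => i.1))
          = (A.submatrix (fun i : {x : Fin n // x ∉ s} => i.1)
              (fun i : {x : Fin n // x ∉ s} => i.1)).map C := by
        ext i j
        simp [Finset.piecewise_eq_of_notMem _ _ _ i.2, hw, Matrix.map_apply]
      rw [hsub, hd]
      exact (RingHom.map_det C _).symm
    calc f (s.piecewise (fun i => (X : ℂ[X]) • e i) (fun i => -(w i)))
        = (∏ _i ∈ s, (X : ℂ[X])) • f (s.piecewise e (fun i => -(w i))) := by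
          rw [h1]; exact f.map_piecewise_smul (fun _ => (X : ℂ[X])) _ s
      _ = (X : ℂ[X]) ^ s.card • ((∏ _i ∈ sᶜ, (-1 : ℂ[X])) • f (s.piecewise e w)) := by
          rw [Finset.prod_const, h2]
          congr 1
          exact f.map_piecewise_smul (fun _ => (-1 : ℂ[X])) _ sᶜ
      _ = (X : ℂ[X]) ^ s.card * ((-1) ^ (n - s.card) * C (d s)) := by
          rw [Finset.prod_const, Finset.card_compl, Fintype.card_fin, h3,
            smul_eq_mul, smul_eq_mul]
  rw [expand, Polynomial.finset_sum_coeff]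
  have hco : ∀ s : Finset (Fin n),
      ((X : ℂ[X]) ^ s.card * ((-1) ^ (n - s.card) * C (d s))).coeff (n - p)
        = if n - p = s.card then (-1 : ℂ) ^ (n - s.card) * d s else 0 := by
    intro s
    have : (X : ℂ[X]) ^ s.card * ((-1) ^ (n - s.card) * C (d s))
        = C ((-1 : ℂ) ^ (n - s.card) * d s) * X ^ s.card := by
      rw [_root_.map_mul, map_pow, map_neg, Polynomial.C_1]; ring
    rw [this, coeff_C_mul_X_pow]
  simp only [hco]
  rw [← Finset.sum_filter]
  have hcard : ∀ s ∈ Finset.univ.filter (fun s : Finset (Fin n) => n - p = s.card),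
      (-1 : ℂ) ^ (n - s.card) * d s = (-1 : ℂ) ^ p * d s := by
    intro s hs
    rw [Finset.mem_filter] at hs
    rw [← hs.2, Nat.sub_sub_self hpn]
  rw [Finset.sum_congr rfl hcard, ← Finset.mul_sum]
  congr 1
  -- reindex subsets of card (n-p) by strictly monotone maps via complement
  rw [Finset.sum_subtype (Finset.univ.filter (fun s : Finset (Fin n) => n - p = s.card))
    (p := fun s : Finset (Fin n) => n - p = s.card) (by simp) d]
  refine (Fintype.sum_bijective
    (fun r : {f : Fin p → Fin n // StrictMono f} =>
      (⟨(Finset.univ.image r.1)ᶜ, by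
        simp [Finset.card_compl, Finset.card_image_of_injective _ r.2.injective]⟩ :
        {s : Finset (Fin n) // n - p = s.card}))
    ?_ _ _ ?_).symm
  · constructor
    · rintro ⟨r₁, h₁⟩ ⟨r₂, h₂⟩ hEq
      have himg : Finset.univ.image r₁ = Finset.univ.image r₂ :=
        compl_injective (congrArg Subtype.val hEq)
      exact Subtype.ext (strictMono_eq_of_image_eq h₁ h₂ himg)
    · rintro ⟨s, hs⟩
      have hc : sᶜ.card = p := by
        rw [Finset.card_compl, Fintype.card_fin, ← hs, Nat.sub_sub_self hpn]
      refine ⟨⟨sᶜ.orderEmbOfFin hc, (sᶜ.orderEmbOfFin hc).strictMono⟩, ?_⟩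
      refine Subtype.ext ?_
      have himg : Finset.univ.image (sᶜ.orderEmbOfFin hc) = sᶜ := by
        apply Finset.coe_injective
        rw [Finset.coe_image, Finset.coe_univ, Set.image_univ, Finset.range_orderEmbOfFin]
      simp only [himg, compl_compl]
  · intro r
    have hmem : ∀ i, r.1 i ∉ (Finset.univ.image r.1)ᶜ := by
      intro i
      simp [Finset.mem_compl]
    set eqv : Fin p ≃ {x : Fin n // x ∉ (Finset.univ.image r.1)ᶜ} :=
      Equiv.ofBijective (fun i => ⟨r.1 i, hmem i⟩)
        ⟨fun i j hij => r.2.injective (congrArg Subtype.val hij),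
         by
          rintro ⟨x, hx⟩
          rw [Finset.mem_compl, not_not, Finset.mem_image] at hx
          obtain ⟨i, _, hi⟩ := hx
          exact ⟨i, Subtype.ext hi⟩⟩ with heqv
    rw [hd]
    dsimp only
    rw [← det_submatrix_equiv_self eqv (A.submatrix _ _), submatrix_submatrix]
    congr 1


end Aux

/-- The coefficient of `λ^(n-p)` in the characteristic polynomial of `Mᴴ * M` equals
`(-1)^p` times the sum of the squared absolute values of the determinants of all
`p × p` submatrices of `M`. -/
theorem charpoly_coeff_eq_sum_sq_subdets {n p : ℕ} (hpn : p ≤ n)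
    (M : Matrix (Fin n) (Fin n) ℂ) :
    ((Mᴴ * M).charpoly).coeff (n - p) =
      (-1) ^ p * ((∑ r : {f : Fin p → Fin n // StrictMono f},
        ∑ c : {g : Fin p → Fin n // StrictMono g},
          ‖(M.submatrix r.1 c.1).det‖ ^ 2 : ℝ) : ℂ) := by
  rw [charpoly_coeff_minors hpn (Mᴴ * M)]
  congr 1
  have key : ∀ r c : {f : Fin p → Fin n // StrictMono f},
      det (Mᴴ.submatrix r.1 c.1) * det (M.submatrix c.1 r.1)
        = ((‖(M.submatrix c.1 r.1).det‖ ^ 2 : ℝ) : ℂ) := by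
    intro r c
    have h1 : Mᴴ.submatrix r.1 c.1 = (M.submatrix c.1 r.1)ᴴ := by
      ext i j; simp [conjTranspose_apply]
    rw [h1, det_conjTranspose, Complex.star_def, mul_comm, Complex.mul_conj,
      ← Complex.sq_norm]
  calc ∑ r : {f : Fin p → Fin n // StrictMono f}, ((Mᴴ * M).submatrix r.1 r.1).det
      = ∑ r : {f : Fin p → Fin n // StrictMono f}, ∑ c : {f : Fin p → Fin n // StrictMono f},
          det (Mᴴ.submatrix r.1 c.1) * det (M.submatrix c.1 r.1) := by
        refine Finset.sum_congr rfl fun r _ => ?_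
        have hsub : (Mᴴ * M).submatrix r.1 r.1 = (Mᴴ.submatrix r.1 id) * (M.submatrix id r.1) := by
          ext i j; simp [Matrix.mul_apply]
        rw [hsub, cauchyBinet]
        refine Finset.sum_congr rfl fun c _ => ?_
        rw [submatrix_submatrix, submatrix_submatrix]
        simp [Function.comp_def]
    _ = ∑ r : {f : Fin p → Fin n // StrictMono f}, ∑ c : {f : Fin p → Fin n // StrictMono f},
          ((‖(M.submatrix c.1 r.1).det‖ ^ 2 : ℝ) : ℂ) :=
        Finset.sum_congr rfl fun r _ => Finset.sum_congr rfl fun c _ => key r c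
    _ = ((∑ r : {f : Fin p → Fin n // StrictMono f}, ∑ c : {g : Fin p → Fin n // StrictMono g},
          ‖(M.submatrix r.1 c.1).det‖ ^ 2 : ℝ) : ℂ) := by
        rw [Finset.sum_comm]
        push_cast
        rfl
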